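/- Let k be an algebraically closed field of characteristic 2 and U = u(m). Up to isomorphism, the only simple finite-dimensional U-modules are the trivial 1-dimensional module V₀ and the 3-dimensional module V₁ given by the matrices A,B,C above. -/

import Mathlib

/-- Over an algebraically closed field of characteristic 2, the only simple
finite-dimensional u(m)-modules are the trivial 1-dimensional module V₀ and the
3-dimensional module V₁ given by the matrices A, B, C. -/
theorem um_simple_modules_classification
    (k : Type*) [Field k] [IsAlgClosed k] [CharP k 2]
    (V : Type*) [AddCommGroup V] [Module k V] [FiniteDimensional k V] [Nontrivial V]
    (A B C : Module.End k V)
    (hab : A*B + B*A = C) (hac : A*C + C*A = A) (hbc : B*C + C*B = B)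
    (ha4 : A^4 = 0) (hb4 : B^4 = 0) (hc2 : C^2 = C)
    (hsimple : ∀ W : Submodule k V,
      (∀ v ∈ W, A v ∈ W ∧ B v ∈ W ∧ C v ∈ W) → W = ⊥ ∨ W = ⊤) :
    (Module.finrank k V = 1 ∧ A = 0 ∧ B = 0 ∧ C = 0) ∨
    (∃ e : V ≃ₗ[k] (Fin 3 → k),
      (∀ v, e (A v) = (!![0,0,0; 1,0,0; 0,1,0] : Matrix (Fin 3) (Fin 3) k).mulVec (e v)) ∧
      (∀ v, e (B v) = (!![0,1,0; 0,0,1; 0,0,0] : Matrix (Fin 3) (Fin 3) k).mulVec (e v)) ∧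
      (∀ v, e (C v) = (!![1,0,0; 0,0,0; 0,0,1] : Matrix (Fin 3) (Fin 3) k).mulVec (e v))) := by
  -- characteristic-2 helpers
  have h2 : ∀ y : V, y + y = 0 := by
    intro y
    have h2k : (2:k) = 0 := by exact_mod_cast CharP.cast_eq_zero k 2
    calc y + y = (2:k) • y := (two_smul k y).symm
    _ = 0 := by rw [h2k, zero_smul]
  have hcan : ∀ a b : V, a + b = 0 → a = b := by
    intro a b hh
    have : a + (b + b) = b := by rw [← add_assoc, hh, zero_add]
    rwa [h2 b, add_zero] at this
  -- pointwise relations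
  have habp : ∀ y : V, A (B y) + B (A y) = C y := by
    intro y
    have := LinearMap.congr_fun hab y
    simpa [LinearMap.add_apply, Module.End.mul_apply] using this
  have hacp : ∀ y : V, A (C y) + C (A y) = A y := by
    intro y
    have := LinearMap.congr_fun hac y
    simpa [LinearMap.add_apply, Module.End.mul_apply] using this
  have hbcp : ∀ y : V, B (C y) + C (B y) = B y := by
    intro y
    have := LinearMap.congr_fun hbc y
    simpa [LinearMap.add_apply, Module.End.mul_apply] using this
  have hc2p : ∀ y : V, C (C y) = C y := by
    intro y
    have := LinearMap.congr_fun hc2 y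
    simpa [Module.End.mul_apply, pow_two] using this
  have hb4p : ∀ y : V, B (B (B (B y))) = 0 := by
    intro y
    have := LinearMap.congr_fun hb4 y
    simpa [Module.End.mul_apply, pow_succ, LinearMap.zero_apply] using this
  have ha4p : ∀ y : V, A (A (A (A y))) = 0 := by
    intro y
    have := LinearMap.congr_fun ha4 y
    simpa [Module.End.mul_apply, pow_succ, LinearMap.zero_apply] using this
  -- the main 3-dimensional case
  have main3 : ∀ v : V, v ≠ 0 → A v = 0 → C v = v →
      (∃ e : V ≃ₗ[k] (Fin 3 → k),
      (∀ y, e (A y) = (!![0,0,0; 1,0,0; 0,1,0] : Matrix (Fin 3) (Fin 3) k).mulVec (e y)) ∧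
      (∀ y, e (B y) = (!![0,1,0; 0,0,1; 0,0,0] : Matrix (Fin 3) (Fin 3) k).mulVec (e y)) ∧
      (∀ y, e (C y) = (!![1,0,0; 0,0,0; 0,0,1] : Matrix (Fin 3) (Fin 3) k).mulVec (e y))) := by
    intro v hv hAv hCv
    set u := B v with hu_def
    set w := B u with hw_def
    set x := B w with hx_def
    have hAu : A u = v := by
      have := habp v
      rw [hAv, map_zero, add_zero, hCv] at this
      exact this
    have hCu : C u = 0 := by
      have h0 := hbcp v
      rw [hCv] at h0
      exact add_eq_left.mp h0
    have hAw : A w = u := by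
      have h0 := habp u
      rw [hAu, hCu] at h0
      exact hcan _ _ h0
    have hCw : C w = w := by
      have h0 := hbcp u
      rw [hCu, map_zero, zero_add] at h0
      exact h0
    have hAx : A x = 0 := by
      have h0 := habp w
      rw [hAw, hCw] at h0
      exact add_eq_right.mp h0
    have hCx : C x = 0 := by
      have h0 := hbcp w
      rw [hCw] at h0
      exact add_eq_left.mp h0
    have hBx : B x = 0 := hb4p v
    -- x must be zero
    have hx : x = 0 := by
      by_contra hx0
      have hinv : ∀ y ∈ (k ∙ x), A y ∈ (k ∙ x) ∧ B y ∈ (k ∙ x) ∧ C y ∈ (k ∙ x) := by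
        intro y hy
        obtain ⟨c, hc⟩ := Submodule.mem_span_singleton.mp hy
        refine ⟨?_, ?_, ?_⟩ <;>
          rw [← hc, map_smul] <;> simp [hAx, hBx, hCx]
      rcases hsimple (k ∙ x) hinv with hbot | htop
      · exact hx0 (by simpa using (Submodule.mem_bot k).mp (hbot ▸ Submodule.mem_span_singleton_self x))
      · have hvmem : v ∈ (k ∙ x) := htop ▸ Submodule.mem_top
        obtain ⟨c, hc⟩ := Submodule.mem_span_singleton.mp hvmem
        have : C v = 0 := by rw [← hc, map_smul, hCx, smul_zero]
        rw [hCv] at this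
        exact hv this
    have hu0 : u ≠ 0 := by
      intro h
      rw [h, map_zero] at hAu
      exact hv hAu.symm
    have hw0 : w ≠ 0 := by
      intro h
      rw [h, map_zero] at hAw
      exact hu0 hAw.symm
    -- invariant subspace spanned by {w, u, v}
    set S : Submodule k V := Submodule.span k ({w, u, v} : Set V) with hS_def
    have hwS : w ∈ S := Submodule.subset_span (by simp)
    have huS : u ∈ S := Submodule.subset_span (by simp)
    have hvS : v ∈ S := Submodule.subset_span (by simp)
    have key : ∀ (T : Module.End k V), T w ∈ S → T u ∈ S → T v ∈ S →
        ∀ y ∈ S, T y ∈ S := by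
      intro T h1 h2' h3 y hy
      have hle : S.map T ≤ S := by
        rw [hS_def, Submodule.map_span, Submodule.span_le]
        rintro z ⟨z', hz', rfl⟩
        simp only [Set.mem_insert_iff, Set.mem_singleton_iff] at hz'
        rcases hz' with rfl | rfl | rfl <;> assumption
      exact hle (Submodule.mem_map_of_mem hy)
    have hStop : S = ⊤ := by
      have hinv : ∀ y ∈ S, A y ∈ S ∧ B y ∈ S ∧ C y ∈ S := by
        intro y hy
        refine ⟨?_, ?_, ?_⟩
        · exact key A (by rw [hAw]; exact huS) (by rw [hAu]; exact hvS)
            (by rw [hAv]; exact S.zero_mem) y hy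
        · exact key B (by rw [← hx_def, hx]; exact S.zero_mem) (by rw [← hw_def]; exact hwS)
            (by rw [← hu_def]; exact huS) y hy
        · exact key C (by rw [hCw]; exact hwS) (by rw [hCu]; exact S.zero_mem)
            (by rw [hCv]; exact hvS) y hy
      rcases hsimple S hinv with hbot | htop
      · exact absurd ((Submodule.mem_bot k).mp (hbot ▸ hvS)) hv
      · exact htop
    -- basis
    have hli : LinearIndependent k ![w, u, v] := by
      rw [Fintype.linearIndependent_iff]
      intro g hg
      rw [Fin.sum_univ_three] at hg
      simp only [Matrix.cons_val_zero, Matrix.cons_val_one, Matrix.head_cons,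
        Matrix.cons_val_two, Matrix.tail_cons] at hg
      have hgC : g 0 • w + g 2 • v = 0 := by
        have := congrArg (fun z => C z) hg
        simpa [map_add, map_smul, hCw, hCu, hCv] using this
      have hg1 : g 1 • u = 0 := by
        have hsum : (g 0 • w + g 2 • v) + g 1 • u = 0 := by rw [← hg]; abel
        rw [hgC, zero_add] at hsum
        exact hsum
      have hg1z : g 1 = 0 := by
        rcases smul_eq_zero.mp hg1 with h | h
        · exact h
        · exact absurd h hu0
      have hgA : g 0 • u = 0 := by
        have := congrArg (fun z => A z) hgC
        simpa [map_add, map_smul, hAw, hAv] using this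
      have hg0 : g 0 = 0 := by
        rcases smul_eq_zero.mp hgA with h | h
        · exact h
        · exact absurd h hu0
      have hg2 : g 2 = 0 := by
        rw [hg0, zero_smul, zero_add] at hgC
        rcases smul_eq_zero.mp hgC with h | h
        · exact h
        · exact absurd h hv
      intro i
      fin_cases i
      exacts [hg0, hg1z, hg2]
    have hrange : Set.range ![w, u, v] = ({w, u, v} : Set V) := by
      ext z
      constructor
      · rintro ⟨i, rfl⟩
        fin_cases i <;> simp
      · intro hz
        simp only [Set.mem_insert_iff, Set.mem_singleton_iff] at hz
        rcases hz with rfl | rfl | rfl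
        · exact ⟨0, rfl⟩
        · exact ⟨1, rfl⟩
        · exact ⟨2, rfl⟩
    have hspan : ⊤ ≤ Submodule.span k (Set.range ![w, u, v]) := by
      rw [hrange, ← hS_def, hStop]
    let bas : Module.Basis (Fin 3) k V := Module.Basis.mk hli hspan
    have hbas : ∀ i, bas i = ![w, u, v] i := fun i => Module.Basis.mk_apply hli hspan i
    have hb0 : bas 0 = w := by rw [hbas]; rfl
    have hb1 : bas 1 = u := by rw [hbas]; rfl
    have hb2 : bas 2 = v := by rw [hbas]; rfl
    let e : V ≃ₗ[k] (Fin 3 → k) := bas.equivFun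
    have hsingle : ∀ i : Fin 3, e (bas i) = Pi.single i 1 := by
      intro i
      funext j
      rw [show e (bas i) j = bas.equivFun (bas i) j from rfl, bas.equivFun_self]
      by_cases h : i = j <;> simp [h, Pi.single_apply]
    have mainT : ∀ (T : Module.End k V) (M : Matrix (Fin 3) (Fin 3) k),
        (∀ i, e (T (bas i)) = M.mulVec (e (bas i))) → ∀ y, e (T y) = M.mulVec (e y) := by
      intro T M h y
      have he : (e.toLinearMap.comp T : V →ₗ[k] (Fin 3 → k)) = (M.mulVecLin).comp e.toLinearMap :=
        bas.ext fun i => by simpa [Matrix.mulVecLin_apply] using h i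
      have := LinearMap.congr_fun he y
      simpa [Matrix.mulVecLin_apply] using this
    have colcomp : ∀ (M : Matrix (Fin 3) (Fin 3) k) (i : Fin 3),
        M.mulVec (Pi.single i 1) = fun j => M j i := by
      intro M i
      funext j
      simp [Matrix.mulVec_single]
    refine ⟨e, ?_, ?_, ?_⟩
    · apply mainT
      have c0 : e (A (bas 0)) = (!![0,0,0; 1,0,0; 0,1,0] : Matrix (Fin 3) (Fin 3) k).mulVec (e (bas 0)) := by
        rw [hsingle, colcomp, hb0, hAw, ← hb1, hsingle]
        funext j; fin_cases j <;> simp [Pi.single_apply, Matrix.vecHead, Matrix.vecTail]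
      have c1 : e (A (bas 1)) = (!![0,0,0; 1,0,0; 0,1,0] : Matrix (Fin 3) (Fin 3) k).mulVec (e (bas 1)) := by
        rw [hsingle, colcomp, hb1, hAu, ← hb2, hsingle]
        funext j; fin_cases j <;> simp [Pi.single_apply, Matrix.vecHead, Matrix.vecTail]
      have c2 : e (A (bas 2)) = (!![0,0,0; 1,0,0; 0,1,0] : Matrix (Fin 3) (Fin 3) k).mulVec (e (bas 2)) := by
        rw [hsingle, colcomp, hb2, hAv, map_zero]
        funext j; fin_cases j <;> simp [Matrix.vecHead, Matrix.vecTail]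
      intro i; fin_cases i
      exacts [c0, c1, c2]
    · apply mainT
      have c0 : e (B (bas 0)) = (!![0,1,0; 0,0,1; 0,0,0] : Matrix (Fin 3) (Fin 3) k).mulVec (e (bas 0)) := by
        rw [hsingle, colcomp, hb0, ← hx_def, hx, map_zero]
        funext j; fin_cases j <;> simp [Matrix.vecHead, Matrix.vecTail]
      have c1 : e (B (bas 1)) = (!![0,1,0; 0,0,1; 0,0,0] : Matrix (Fin 3) (Fin 3) k).mulVec (e (bas 1)) := by
        rw [hsingle, colcomp, hb1, ← hw_def, ← hb0, hsingle]
        funext j; fin_cases j <;> simp [Pi.single_apply, Matrix.vecHead, Matrix.vecTail]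
      have c2 : e (B (bas 2)) = (!![0,1,0; 0,0,1; 0,0,0] : Matrix (Fin 3) (Fin 3) k).mulVec (e (bas 2)) := by
        rw [hsingle, colcomp, hb2, ← hu_def, ← hb1, hsingle]
        funext j; fin_cases j <;> simp [Pi.single_apply, Matrix.vecHead, Matrix.vecTail]
      intro i; fin_cases i
      exacts [c0, c1, c2]
    · apply mainT
      have c0 : e (C (bas 0)) = (!![1,0,0; 0,0,0; 0,0,1] : Matrix (Fin 3) (Fin 3) k).mulVec (e (bas 0)) := by
        rw [hsingle, colcomp, hb0, hCw, ← hb0, hsingle]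
        funext j; fin_cases j <;> simp [Pi.single_apply, Matrix.vecHead, Matrix.vecTail]
      have c1 : e (C (bas 1)) = (!![1,0,0; 0,0,0; 0,0,1] : Matrix (Fin 3) (Fin 3) k).mulVec (e (bas 1)) := by
        rw [hsingle, colcomp, hb1, hCu, map_zero]
        funext j; fin_cases j <;> simp [Matrix.vecHead, Matrix.vecTail]
      have c2 : e (C (bas 2)) = (!![1,0,0; 0,0,0; 0,0,1] : Matrix (Fin 3) (Fin 3) k).mulVec (e (bas 2)) := by
        rw [hsingle, colcomp, hb2, hCv, ← hb2, hsingle]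
        funext j; fin_cases j <;> simp [Pi.single_apply, Matrix.vecHead, Matrix.vecTail]
      intro i; fin_cases i
      exacts [c0, c1, c2]
  -- find a nonzero vector killed by A
  obtain ⟨z, hz⟩ := exists_ne (0 : V)
  have hker : ∃ v : V, v ≠ 0 ∧ A v = 0 := by
    by_cases h1 : A z = 0
    · exact ⟨z, hz, h1⟩
    by_cases h2' : A (A z) = 0
    · exact ⟨A z, h1, h2'⟩
    by_cases h3 : A (A (A z)) = 0
    · exact ⟨A (A z), h2', h3⟩
    exact ⟨A (A (A z)), h3, ha4p z⟩
  obtain ⟨v₀, hv₀, hAv₀⟩ := hker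
  have hACv : ∀ y : V, A y = 0 → A (C y) = 0 := by
    intro y hy
    have h0 := hacp y
    rw [hy, map_zero, add_zero] at h0
    exact h0
  by_cases hv₁ : C v₀ = 0
  · -- C v₀ = 0 : look at B v₀
    set u₁ := B v₀ with hu₁_def
    have hAu₁ : A u₁ = 0 := by
      have h0 := habp v₀
      rw [hAv₀, map_zero, add_zero, hv₁] at h0
      exact h0
    have hCu₁ : C u₁ = u₁ := by
      have h0 := hbcp v₀
      rw [hv₁, map_zero, zero_add] at h0
      exact h0
    by_cases hu₁0 : u₁ = 0
    · -- trivial 1-dimensional case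
      left
      have hBv₀ : B v₀ = 0 := hu₁0
      have hSint : ∀ y ∈ (k ∙ v₀), A y ∈ (k ∙ v₀) ∧ B y ∈ (k ∙ v₀) ∧ C y ∈ (k ∙ v₀) := by
        intro y hy
        obtain ⟨c, hc⟩ := Submodule.mem_span_singleton.mp hy
        refine ⟨?_, ?_, ?_⟩ <;> rw [← hc, map_smul] <;> simp [hAv₀, hBv₀, hv₁]
      have htop : (k ∙ v₀) = ⊤ := by
        rcases hsimple (k ∙ v₀) hSint with hbot | htop
        · exact absurd ((Submodule.mem_bot k).mp (hbot ▸ Submodule.mem_span_singleton_self v₀)) hv₀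
        · exact htop
      have hzero : ∀ (T : Module.End k V), T v₀ = 0 → T = 0 := by
        intro T hT
        ext y
        have hy : y ∈ (k ∙ v₀) := htop ▸ Submodule.mem_top
        obtain ⟨c, hc⟩ := Submodule.mem_span_singleton.mp hy
        rw [← hc, map_smul, hT, smul_zero]
        rfl
      refine ⟨?_, hzero A hAv₀, hzero B hBv₀, hzero C hv₁⟩
      rw [← finrank_top k V, ← htop, finrank_span_singleton hv₀]
    · exact Or.inr (main3 u₁ hu₁0 hAu₁ hCu₁)
  · -- C v₀ ≠ 0 : use it
    refine Or.inr (main3 (C v₀) hv₁ (hACv v₀ hAv₀) (hc2p v₀))
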